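/- Let A and B be symmetric d×d real matrices such that I + A and I + B are positive definite. Then −log det₂((I+A)(I+B)^{-1}) = ∫₀¹ (1−t)·‖(I+(1−t)B+tA)^{-1/2} (A−B) (I+(1−t)B+tA)^{-1/2}‖²_HS dt. -/

import Mathlib

open Matrix MeasureTheory Real
open scoped Classical
noncomputable section

/-- Hilbert-Schmidt (Frobenius) norm of a real matrix. -/
def hsNorm {d : ℕ} (M : Matrix (Fin d) (Fin d) ℝ) : ℝ :=
  Real.sqrt (∑ i, ∑ j, (M i j) ^ 2)

/-- Operator norm of a matrix, induced by the Euclidean norm on ℝ^d. -/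
def opNorm {d : ℕ} (M : Matrix (Fin d) (Fin d) ℝ) : ℝ :=
  ‖LinearMap.toContinuousLinearMap (Matrix.toEuclideanLin M)‖

/-- The positive square root of a positive semidefinite matrix (junk value `0` otherwise). -/

def msqrt {d : ℕ} (M : Matrix (Fin d) (Fin d) ℝ) : Matrix (Fin d) (Fin d) ℝ :=
  if h : M.PosSemidef then (h.1.eigenvectorUnitary : Matrix (Fin d) (Fin d) ℝ) *
    diagonal ((↑) ∘ (√·) ∘ h.1.eigenvalues) * (star h.1.eigenvectorUnitary : Matrix (Fin d) (Fin d) ℝ) else 0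

/-- `M^{-1/2}`: the inverse of the positive square root. -/
def invSqrt {d : ℕ} (M : Matrix (Fin d) (Fin d) ℝ) : Matrix (Fin d) (Fin d) ℝ :=
  (msqrt M)⁻¹

/-- The Fredholm–Carleman determinant `det₂(M) = exp(Trace(Id - M)) * det M`. -/
def det2 {d : ℕ} (M : Matrix (Fin d) (Fin d) ℝ) : ℝ :=
  Real.exp ((1 - M).trace) * M.det

namespace Stmt2Aux

lemma msqrt_transpose {d : ℕ} {N : Matrix (Fin d) (Fin d) ℝ} (h : N.PosSemidef) :
    (msqrt N)ᵀ = msqrt N := by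
  rw [msqrt, dif_pos h]
  simp [Matrix.transpose_mul, Matrix.mul_assoc, Matrix.star_eq_conjTranspose,
    Matrix.conjTranspose_eq_transpose_of_trivial]

lemma msqrt_mul_self {d : ℕ} {N : Matrix (Fin d) (Fin d) ℝ} (h : N.PosSemidef) :
    msqrt N * msqrt N = N := by
  rw [msqrt, dif_pos h]
  set U : Matrix (Fin d) (Fin d) ℝ := (h.1.eigenvectorUnitary : Matrix (Fin d) (Fin d) ℝ)
  have hU : (star h.1.eigenvectorUnitary : Matrix (Fin d) (Fin d) ℝ) * U = 1 :=
    Unitary.coe_star_mul_self _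
  have hD : diagonal ((↑) ∘ (√·) ∘ h.1.eigenvalues) * diagonal ((↑) ∘ (√·) ∘ h.1.eigenvalues)
      = diagonal (((↑) : ℝ → ℝ) ∘ h.1.eigenvalues) := by
    rw [diagonal_mul_diagonal]
    congr 1; ext i
    simp [Real.mul_self_sqrt (h.eigenvalues_nonneg i)]
  conv_rhs => rw [h.1.spectral_theorem, Unitary.conjStarAlgAut_apply]
  calc U * diagonal ((↑) ∘ (√·) ∘ h.1.eigenvalues) * (star h.1.eigenvectorUnitary : Matrix (Fin d) (Fin d) ℝ) *
        (U * diagonal ((↑) ∘ (√·) ∘ h.1.eigenvalues) * (star h.1.eigenvectorUnitary : Matrix (Fin d) (Fin d) ℝ))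
      = U * (diagonal ((↑) ∘ (√·) ∘ h.1.eigenvalues) * ((star h.1.eigenvectorUnitary : Matrix (Fin d) (Fin d) ℝ) * U) *
        diagonal ((↑) ∘ (√·) ∘ h.1.eigenvalues)) * (star h.1.eigenvectorUnitary : Matrix (Fin d) (Fin d) ℝ) := by
        simp only [Matrix.mul_assoc]
    _ = _ := by rw [hU, Matrix.mul_one, hD]; rfl

lemma posDef_comb {d : ℕ} {A B : Matrix (Fin d) (Fin d) ℝ}
    (hA : (1 + A).PosDef) (hB : (1 + B).PosDef) {t : ℝ} (ht : t ∈ Set.Icc (0:ℝ) 1) :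
    (1 + (1 - t) • B + t • A).PosDef := by
  obtain ⟨ht0, ht1⟩ := ht
  have hM : 1 + (1 - t) • B + t • A = (1 - t) • (1 + B) + t • (1 + A) := by
    module
  rw [hM]
  have hBt : Bᵀ = B := by simpa using hB.1.eq
  have hAt : Aᵀ = A := by simpa using hA.1.eq
  refine Matrix.PosDef.of_dotProduct_mulVec_pos ?_ ?_
  · simp [Matrix.IsHermitian, conjTranspose_add, conjTranspose_smul, hBt, hAt]
  · intro x hx
    have hqB : 0 < star x ⬝ᵥ (1 + B) *ᵥ x := hB.dotProduct_mulVec_pos hx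
    have hqA : 0 < star x ⬝ᵥ (1 + A) *ᵥ x := hA.dotProduct_mulVec_pos hx
    rw [add_mulVec, dotProduct_add, smul_mulVec, smul_mulVec,
      dotProduct_smul, dotProduct_smul, smul_eq_mul, smul_eq_mul]
    rcases eq_or_lt_of_le ht1 with h1 | h1
    · subst h1; simpa using hqA
    · exact add_pos_of_pos_of_nonneg (mul_pos (by linarith) hqB)
        (mul_nonneg ht0 hqA.le)

lemma hs_trace {d : ℕ} {N C : Matrix (Fin d) (Fin d) ℝ} (hN : N.PosDef) (hC : Cᵀ = C) :
    (hsNorm (invSqrt N * C * invSqrt N))^2 = (N⁻¹ * C * N⁻¹ * C).trace := by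
  have hNs : N.PosSemidef := hN.posSemidef
  have hmsqrt : msqrt N = msqrt N := rfl
  set S : Matrix (Fin d) (Fin d) ℝ := (msqrt N)⁻¹ with hSdef
  have hinvS : invSqrt N = S := by rw [invSqrt, hmsqrt]
  have hsqt : (msqrt N)ᵀ = msqrt N := msqrt_transpose hNs
  have hSt : Sᵀ = S := by rw [hSdef, Matrix.transpose_nonsing_inv, hsqt]
  have hQ : N⁻¹ = S * S := by
    rw [hSdef, ← Matrix.mul_inv_rev, msqrt_mul_self hNs]
  set X : Matrix (Fin d) (Fin d) ℝ := S * C * S with hXdef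
  have hXt : Xᵀ = X := by
    rw [hXdef, Matrix.transpose_mul, Matrix.transpose_mul, hSt, hC, Matrix.mul_assoc]
  have h1 : (hsNorm X)^2 = ∑ i, ∑ j, (X i j)^2 := by
    rw [hsNorm, Real.sq_sqrt]
    exact Finset.sum_nonneg fun _ _ => Finset.sum_nonneg fun _ _ => sq_nonneg _
  have h2 : (X * X).trace = ∑ i, ∑ j, (X i j)^2 := by
    rw [Matrix.trace]
    simp only [Matrix.diag, Matrix.mul_apply]
    congr 1; ext i; congr 1; ext j
    have : X j i = X i j := by rw [← Matrix.transpose_apply X i j, hXt]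
    rw [this, pow_two]
  have h3 : X * X = S * (C * (S * S) * C) * S := by rw [hXdef]; simp only [Matrix.mul_assoc]
  rw [hinvS, ← hXdef, h1, ← h2, h3, Matrix.trace_mul_cycle, hQ]
  simp only [Matrix.mul_assoc]

section calc_part
attribute [local instance] Matrix.linftyOpNormedRing Matrix.linftyOpNormedAlgebra
variable {d : ℕ} (A B : Matrix (Fin d) (Fin d) ℝ)

lemma path_hasDerivAt (t : ℝ) :
    HasDerivAt (fun s : ℝ => (1 + B) + s • (A - B)) (A - B) t := by
  exact (((hasDerivAt_id t).smul_const (A - B)).const_add (1 + B)).congr_deriv (one_smul _ _)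

lemma inv_hasDerivAt {t : ℝ} (h : IsUnit ((1 + B) + t • (A - B))) :
    HasDerivAt (fun s : ℝ => Ring.inverse ((1 + B) + s • (A - B)))
      (-(((1 + B) + t • (A - B))⁻¹ * (A - B) * ((1 + B) + t • (A - B))⁻¹)) t := by
  have hu : (h.unit : Matrix (Fin d) (Fin d) ℝ) = (1 + B) + t • (A - B) := h.unit_spec
  have hinv : ((h.unit⁻¹ : _ˣ) : Matrix (Fin d) (Fin d) ℝ) = ((1 + B) + t • (A - B))⁻¹ := by
    rw [Matrix.coe_units_inv, hu]
  have H := (hasFDerivAt_ringInverse (𝕜 := ℝ) h.unit)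
  rw [hu] at H
  have := H.comp_hasDerivAt t (path_hasDerivAt A B t)
  exact this.congr_deriv (by simp [hinv, ContinuousLinearMap.mulLeftRight_apply])

lemma det_hasDerivAt {t : ℝ} (h : IsUnit ((1 + B) + t • (A - B))) :
    HasDerivAt (fun s : ℝ => ((1 + B) + s • (A - B)).det)
      (((1 + B) + t • (A - B)).det * ((((1 + B) + t • (A - B))⁻¹ * (A - B)).trace)) t := by
  set N := (1 + B) + t • (A - B) with hN
  set C := A - B with hC
  set P : Polynomial ℝ := (Matrix.det (1 + (Polynomial.X : Polynomial ℝ) • (N⁻¹ * C).map Polynomial.C)).divX.divX with hP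
  have key : ∀ u : ℝ, ((1 + B) + u • C).det =
      N.det * (1 + (N⁻¹ * C).trace * (u - t) + P.eval (u - t) * (u - t) ^ 2) := by
    intro u
    have h1 : (1 + B) + u • C = N * (1 + (u - t) • (N⁻¹ * C)) := by
      rw [mul_add, mul_one, mul_smul_comm, ← Matrix.mul_assoc,
        Matrix.mul_nonsing_inv _ ((Matrix.isUnit_iff_isUnit_det N).mp h), Matrix.one_mul, hN]
      module
    rw [h1, Matrix.det_mul, Matrix.det_one_add_smul, ← hP]
  have h2 : HasDerivAt (fun u : ℝ =>
      N.det * (1 + (N⁻¹ * C).trace * (u - t) + P.eval (u - t) * (u - t) ^ 2))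
      (N.det * ((N⁻¹ * C).trace)) t := by
    have hid : HasDerivAt (fun u : ℝ => u - t) 1 t := (hasDerivAt_id t).sub_const t
    have e1 : HasDerivAt (fun u : ℝ => (N⁻¹ * C).trace * (u - t)) ((N⁻¹ * C).trace) t := by
      simpa using hid.const_mul ((N⁻¹ * C).trace)
    have e2 : HasDerivAt (fun u : ℝ => P.eval (u - t)) (P.derivative.eval 0) t := by
      have e2' := HasDerivAt.comp (h₂ := fun x => P.eval x) (h := fun u => u - t) (x := t) (by simpa using P.hasDerivAt (t - t)) hid
      exact e2'.congr_deriv (by simp)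
    have e3 : HasDerivAt (fun u : ℝ => (u - t) ^ 2) 0 t := by
      exact (hid.pow 2).congr_deriv (by simp)
    have e4 := e2.mul e3
    have e5 := ((hasDerivAt_const t (1:ℝ)).add e1).add e4
    have e6 := e5.const_mul N.det
    exact e6.congr_deriv (by simp [sub_self])
  exact h2.congr_of_eventuallyEq (Filter.Eventually.of_forall key)

lemma integral_eq (hA : (1 + A).PosDef) (hB : (1 + B).PosDef) :
    ∫ t in (0:ℝ)..1, (1 - t) *
        ((((1 + B) + t • (A - B))⁻¹ * (A - B) * ((1 + B) + t • (A - B))⁻¹ * (A - B)).trace)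
      = ((1 + B)⁻¹ * (A - B)).trace + Real.log ((1 + B).det) - Real.log ((1 + A).det) := by
  set C : Matrix (Fin d) (Fin d) ℝ := A - B with hCdef
  set M : ℝ → Matrix (Fin d) (Fin d) ℝ := fun t => (1 + B) + t • C with hMdef
  have hpos : ∀ t ∈ Set.Icc (0:ℝ) 1, (M t).PosDef := by
    intro t ht
    have : M t = 1 + (1 - t) • B + t • A := by rw [hMdef]; module
    rw [this]
    exact posDef_comb hA hB ht
  have hunit : ∀ t ∈ Set.Icc (0:ℝ) 1, IsUnit (M t) := fun t ht =>
    (Matrix.isUnit_iff_isUnit_det (M t)).mpr (hpos t ht).det_pos.ne'.isUnit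
  set F : ℝ → ℝ := fun t => (((M t)⁻¹ * C * (M t)⁻¹ * C)).trace with hFdef
  set g : ℝ → ℝ := fun t => ((Ring.inverse (M t)) * C).trace with hgdef
  set φ : ℝ → ℝ := fun t => (1 - t) * g t + Real.log ((M t).det) with hφdef
  -- derivative of g
  have hg : ∀ t ∈ Set.Icc (0:ℝ) 1, HasDerivAt g (-(F t)) t := by
    intro t ht
    set L := LinearMap.toContinuousLinearMap
      ((Matrix.traceLinearMap (Fin d) ℝ ℝ).comp (LinearMap.mulRight ℝ C)) with hL
    have h := L.hasFDerivAt.comp_hasDerivAt t (inv_hasDerivAt A B (hunit t ht))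
    have : HasDerivAt g (L (-((M t)⁻¹ * C * (M t)⁻¹))) t := h
    convert this using 1
    rw [hL]
    simp [hFdef, Matrix.trace_neg, Matrix.mul_assoc]
  -- derivative of log det
  have hlog : ∀ t ∈ Set.Icc (0:ℝ) 1, HasDerivAt (fun s => Real.log ((M s).det))
      (((M t)⁻¹ * C).trace) t := by
    intro t ht
    have h := (det_hasDerivAt A B (hunit t ht)).log (hpos t ht).det_pos.ne'
    convert h using 1
    exact (mul_div_cancel_left₀ _ ((hpos t ht).det_pos.ne')).symm
  -- derivative of -φ
  have hφderiv : ∀ t ∈ Set.Icc (0:ℝ) 1, HasDerivAt (fun s => -φ s) ((1 - t) * F t) t := by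
    intro t ht
    have h1 : HasDerivAt (fun s : ℝ => 1 - s) (-1) t := by
      simpa using (hasDerivAt_id t).const_sub 1
    have hsum := (h1.mul (hg t ht)).add (hlog t ht)
    have hgt : g t = ((M t)⁻¹ * C).trace := by
      rw [hgdef]; rw [Matrix.nonsing_inv_eq_ringInverse]
    refine hsum.neg.congr_deriv ?_
    rw [hgt]; ring
  -- integrability
  have hInvCont : ContinuousOn (fun t : ℝ => Ring.inverse (M t)) (Set.Icc (0:ℝ) 1) :=
    fun t ht => ((inv_hasDerivAt A B (hunit t ht)).continuousAt).continuousWithinAt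
  have htr : Continuous (fun X : Matrix (Fin d) (Fin d) ℝ => X.trace) :=
    LinearMap.continuous_of_finiteDimensional (Matrix.traceLinearMap (Fin d) ℝ ℝ)
  have hL2 : Continuous (fun X : Matrix (Fin d) (Fin d) ℝ => (X * C * X * C).trace) :=
    htr.comp (((continuous_id.mul continuous_const).mul continuous_id).mul continuous_const)
  have hFcont : ContinuousOn F (Set.Icc (0:ℝ) 1) := by
    have : ContinuousOn (fun t : ℝ => ((Ring.inverse (M t)) * C * (Ring.inverse (M t)) * C).trace)
        (Set.Icc (0:ℝ) 1) := hL2.comp_continuousOn hInvCont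
    refine this.congr fun t ht => ?_
    rw [hFdef]
    simp only [Matrix.nonsing_inv_eq_ringInverse]
  have hInt : IntervalIntegrable (fun t => (1 - t) * F t) volume 0 1 := by
    apply ContinuousOn.intervalIntegrable
    rw [Set.uIcc_of_le zero_le_one]
    exact ((continuous_const.sub continuous_id).continuousOn).mul hFcont
  -- FTC
  have hFTC := intervalIntegral.integral_eq_sub_of_hasDerivAt
    (f := fun s => -φ s) (f' := fun t => (1 - t) * F t)
    (fun t ht => hφderiv t (by rwa [Set.uIcc_of_le zero_le_one] at ht)) hInt
  rw [hFTC]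
  -- evaluate φ 0 and φ 1
  have hM0 : M 0 = 1 + B := by rw [hMdef]; simp
  have hM1 : M 1 = 1 + A := by rw [hMdef]; module
  have hφ0 : φ 0 = ((1 + B)⁻¹ * C).trace + Real.log ((1 + B).det) := by
    rw [hφdef]
    simp only [hgdef, hM0]
    rw [Matrix.nonsing_inv_eq_ringInverse]
    ring
  have hφ1 : φ 1 = Real.log ((1 + A).det) := by
    rw [hφdef]
    simp only [hgdef, hM1]
    ring
  show -φ 1 - -φ 0 = _
  rw [hφ0, hφ1]
  ring


end calc_part
end Stmt2Aux

theorem stmt_2 {d : ℕ} (A B : Matrix (Fin d) (Fin d) ℝ)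
    (hAs : A.IsSymm) (hBs : B.IsSymm)
    (hA : (1 + A).PosDef) (hB : (1 + B).PosDef) :
    -Real.log (det2 ((1 + A) * (1 + B)⁻¹)) =
      ∫ t in (0:ℝ)..1, (1 - t) *
        (hsNorm (invSqrt (1 + (1 - t) • B + t • A) * (A - B) *
          invSqrt (1 + (1 - t) • B + t • A))) ^ 2 := by
  classical
  have hCt : (A - B)ᵀ = A - B := by
    rw [Matrix.transpose_sub, hAs, hBs]
  have hcong : (∫ t in (0:ℝ)..1, (1 - t) *
        (hsNorm (invSqrt (1 + (1 - t) • B + t • A) * (A - B) *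
          invSqrt (1 + (1 - t) • B + t • A))) ^ 2)
      = ∫ t in (0:ℝ)..1, (1 - t) *
        ((((1 + B) + t • (A - B))⁻¹ * (A - B) * ((1 + B) + t • (A - B))⁻¹ * (A - B)).trace) := by
    apply intervalIntegral.integral_congr
    intro t ht
    rw [Set.uIcc_of_le zero_le_one] at ht
    have hN : (1 + (1 - t) • B + t • A).PosDef := Stmt2Aux.posDef_comb hA hB ht
    have hhs := Stmt2Aux.hs_trace hN hCt
    have hpath : 1 + (1 - t) • B + t • A = (1 + B) + t • (A - B) := by module
    simp only
    rw [hhs, hpath]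
  rw [hcong, Stmt2Aux.integral_eq A B hA hB]
  -- compute the left-hand side
  set X : Matrix (Fin d) (Fin d) ℝ := (1 + A) * (1 + B)⁻¹ with hXdef
  have hAdet : 0 < (1 + A).det := hA.det_pos
  have hBdet : 0 < (1 + B).det := hB.det_pos
  have hBu : IsUnit (1 + B).det := hBdet.ne'.isUnit
  have hBinvdet : ((1 + B)⁻¹).det = ((1 + B).det)⁻¹ := by
    rw [Matrix.det_nonsing_inv, Ring.inverse_eq_inv]
  have hXdet : X.det = (1 + A).det * ((1 + B).det)⁻¹ := by
    rw [hXdef, Matrix.det_mul, hBinvdet]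
  have hXdetpos : 0 < X.det := by
    rw [hXdet]; exact mul_pos hAdet (inv_pos.mpr hBdet)
  have hlogdet2 : Real.log (det2 X) = (1 - X).trace + Real.log X.det := by
    rw [det2, Real.log_mul (Real.exp_ne_zero _) hXdetpos.ne', Real.log_exp]
  have hlogX : Real.log X.det = Real.log ((1 + A).det) - Real.log ((1 + B).det) := by
    rw [hXdet, Real.log_mul hAdet.ne' (inv_ne_zero hBdet.ne'), Real.log_inv]
    ring
  have htr1X : (1 - X).trace = -(((1 + B)⁻¹ * (A - B)).trace) := by
    have hmul : (1 + B) * (1 + B)⁻¹ = 1 := Matrix.mul_nonsing_inv _ hBu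
    have h1 : (1 : Matrix (Fin d) (Fin d) ℝ) - X = (-(A - B)) * (1 + B)⁻¹ := by
      rw [hXdef]
      nth_rewrite 1 [← hmul]
      rw [← Matrix.sub_mul]
      congr 1
      abel
    rw [h1, Matrix.neg_mul, Matrix.trace_neg, Matrix.trace_mul_comm]
  rw [hlogdet2, hlogX, htr1X]
  ring
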